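/- Let L be a Lie algebra with G-grading L = ⊕_{i∈G} L_i (G an abelian semigroup), let ε satisfy the graded-contraction equations, and let L^ε denote the contracted Lie algebra with bracket [x,y]_new = ε_{i,j}[x,y] on homogeneous elements. Let r: L → End(V) be a representation compatible with the grading, i.e., V = ⊕_{j∈G} V_j with r(X_i)V_j ⊆ V_{i+j} for X_i ∈ L_i. If ψ: G × G → ℂ satisfies ψ_{j,k}ψ_{i,j+k} = ψ_{i,k}ψ_{j,i+k} = ε_{i,j}ψ_{i+j,k} for all i,j,k ∈ G, then r^ε defined by r^ε(X_i)v_j := ψ_{i,j} r(X_i)v_j (extended linearly) is a representation of L^ε on V. -/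

import Mathlib

attribute [local instance 100] LieRing.ofAssociativeRing

/-- If `r` is a representation of a `G`-graded Lie algebra `L` compatible with the grading,
`ε` solves the graded-contraction equations and `ψ` solves the associated equations
`ψ_{j,k}ψ_{i,j+k} = ψ_{i,k}ψ_{j,i+k} = ε_{i,j}ψ_{i+j,k}`, then the map `r^ε` defined on
homogeneous vectors by `r^ε(X_i)v_j = ψ_{i,j} r(X_i)v_j` is a representation of the
contracted Lie algebra `L^ε` (whose bracket is `[x,y]_new = ε_{i,j}[x,y]`). -/
theorem stmt_4 (G : Type*) [AddCommSemigroup G] [DecidableEq G]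
    (L : Type*) [LieRing L] [LieAlgebra ℂ L]
    (V : Type*) [AddCommGroup V] [Module ℂ V]
    (Lg : G → Submodule ℂ L) (hLinternal : DirectSum.IsInternal Lg)
    (hgrading : ∀ i j : G, ∀ x ∈ Lg i, ∀ y ∈ Lg j, ⁅x, y⁆ ∈ Lg (i + j))
    (ε : G → G → ℂ) (hsymm : ∀ i j, ε i j = ε j i)
    (hε : ∀ i j k : G, ε i j * ε (i + j) k = ε j k * ε (j + k) i ∧
      ε j k * ε (j + k) i = ε k i * ε (k + i) j)
    (b : L →ₗ[ℂ] L →ₗ[ℂ] L)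
    (hb : ∀ i j : G, ∀ x ∈ Lg i, ∀ y ∈ Lg j, b x y = ε i j • ⁅x, y⁆)
    (r : L →ₗ⁅ℂ⁆ Module.End ℂ V)
    (Vg : G → Submodule ℂ V) (hVinternal : DirectSum.IsInternal Vg)
    (hcompat : ∀ i j : G, ∀ x ∈ Lg i, ∀ v ∈ Vg j, r x v ∈ Vg (i + j))
    (ψ : G → G → ℂ)
    (hψ : ∀ i j k : G, ψ j k * ψ i (j + k) = ψ i k * ψ j (i + k) ∧
      ψ i k * ψ j (i + k) = ε i j * ψ (i + j) k)
    (s : L →ₗ[ℂ] Module.End ℂ V)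
    (hs : ∀ i j : G, ∀ x ∈ Lg i, ∀ v ∈ Vg j, s x v = ψ i j • r x v) :
    ∀ x y : L, s (b x y) = ⁅s x, s y⁆ := by

  have hLtop : (⨆ i, Lg i) = ⊤ := hLinternal.submodule_iSup_eq_top
  have hVtop : (⨆ i, Vg i) = ⊤ := hVinternal.submodule_iSup_eq_top
  -- key computation on homogeneous elements
  have key : ∀ i j k : G, ∀ x ∈ Lg i, ∀ y ∈ Lg j, ∀ v ∈ Vg k,
      s (b x y) v = s x (s y v) - s y (s x v) := by
    intro i j k x hx y hy v hv
    have hz : ⁅x, y⁆ ∈ Lg (i + j) := hgrading i j x hx y hy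
    rw [hb i j x hx y hy, map_smul, LinearMap.smul_apply, hs (i+j) k _ hz v hv,
      r.map_lie, hs j k y hy v hv, hs i k x hx v hv, (s x).map_smul, (s y).map_smul,
      hs i (j+k) x hx _ (hcompat j k y hy v hv), hs j (i+k) y hy _ (hcompat i k x hx v hv)]
    simp only [Ring.lie_def, LinearMap.sub_apply, Module.End.mul_apply, smul_sub, smul_smul]
    rw [(hψ i j k).1, (hψ i j k).2]
  -- extend to arbitrary v
  have key2 : ∀ i j : G, ∀ x ∈ Lg i, ∀ y ∈ Lg j, ∀ v : V,
      s (b x y) v = s x (s y v) - s y (s x v) := by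
    intro i j x hx y hy v
    have hv : v ∈ ⨆ k, Vg k := hVtop ▸ Submodule.mem_top
    refine Submodule.iSup_induction Vg (motive := fun v => s (b x y) v = s x (s y v) - s y (s x v))
      hv (fun k v hv => key i j k x hx y hy v hv) (by simp) ?_
    intro v w h1 h2
    simp only [map_add, h1, h2]
    abel
  -- extend to arbitrary y
  have key3 : ∀ i : G, ∀ x ∈ Lg i, ∀ y : L, ∀ v : V,
      s (b x y) v = s x (s y v) - s y (s x v) := by
    intro i x hx y
    have hy : y ∈ ⨆ j, Lg j := hLtop ▸ Submodule.mem_top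
    refine Submodule.iSup_induction Lg
      (motive := fun y => ∀ v : V, s (b x y) v = s x (s y v) - s y (s x v))
      hy (fun j y hy v => key2 i j x hx y hy v) (by simp) ?_
    intro y z h1 h2 v
    simp only [map_add, LinearMap.add_apply, h1 v, h2 v]
    abel
  -- extend to arbitrary x
  have key4 : ∀ x y : L, ∀ v : V, s (b x y) v = s x (s y v) - s y (s x v) := by
    intro x y v
    have hx : x ∈ ⨆ i, Lg i := hLtop ▸ Submodule.mem_top
    refine Submodule.iSup_induction Lg
      (motive := fun x => ∀ y : L, ∀ v : V, s (b x y) v = s x (s y v) - s y (s x v))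
      hx (fun i x hx y v => key3 i x hx y v) (by simp) ?_ y v
    intro x z h1 h2 y v
    simp only [map_add, LinearMap.add_apply, h1 y v, h2 y v]
    abel
  intro x y
  ext v
  simp only [Ring.lie_def, LinearMap.sub_apply, Module.End.mul_apply]
  exact key4 x y v
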